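/- Let X : Ξ → ℝ^d be such that (ξ,θ) ↦ X(ξ) is integrable with respect to P = P_Ξ ⊗ P_Θ (i.e. X is P_Ξ-integrable), and suppose the density f_E of E_*P_Θ is continuous. Define Φ : ℝ^m → ℝ^d by Φ(y) = (∫_Ξ X(ξ) · f_E(y − Y(ξ)) dP_Ξ(ξ)) / (∫_Ξ f_E(y − Y(ξ)) dP_Ξ(ξ)) whenever the denominator is positive (and Φ(y) = 0 otherwise). Then Φ is a version of the conditional expectation of the random variable (ξ,θ) ↦ X(ξ) given the measurement Z, i.e. Φ is Z_*P-integrable and ∫_{Z⁻¹(B)} X(ξ) dP(ξ,θ) = ∫_{Z⁻¹(B)} Φ(Z(ξ,θ)) dP(ξ,θ) for every Borel set B ⊆ ℝ^m. -/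

import Mathlib

open MeasureTheory ENNReal

section AuxCondExp

variable {Θ : Type*} [MeasurableSpace Θ] {m : ℕ}

lemma aux_lintegral_translate (PΘ : Measure Θ)
    (E : Θ → EuclideanSpace ℝ (Fin m)) (hE : Measurable E)
    (fE : EuclideanSpace ℝ (Fin m) → ℝ) (hfEm : Measurable fE)
    (hfEdens : Measure.map E PΘ = volume.withDensity (fun y => ENNReal.ofReal (fE y)))
    (c : EuclideanSpace ℝ (Fin m)) (h : EuclideanSpace ℝ (Fin m) → ℝ≥0∞) (hh : Measurable h) :
    ∫⁻ θ, h (c + E θ) ∂PΘ = ∫⁻ y, h y * ENNReal.ofReal (fE (y - c)) := by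
  have h1 : ∫⁻ θ, h (c + E θ) ∂PΘ = ∫⁻ e, h (c + e) ∂(Measure.map E PΘ) :=
    (lintegral_map (hh.comp (measurable_const_add c)) hE).symm
  have hm2 : Measurable fun e : EuclideanSpace ℝ (Fin m) => h (c + e) :=
    hh.comp (measurable_const_add c)
  rw [h1, hfEdens, lintegral_withDensity_eq_lintegral_mul _ (hfEm.ennreal_ofReal) hm2]
  have h2 := lintegral_add_left_eq_self (μ := (volume : Measure (EuclideanSpace ℝ (Fin m))))
    (fun x => ENNReal.ofReal (fE x) * h (c + x)) (-c)
  calc ∫⁻ a, ((fun y => ENNReal.ofReal (fE y)) * fun e => h (c + e)) a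
      = ∫⁻ x, ENNReal.ofReal (fE (-c + x)) * h (c + (-c + x)) := h2.symm
    _ = ∫⁻ y, h y * ENNReal.ofReal (fE (y - c)) := by
        congr 1; funext x
        rw [add_neg_cancel_left, ← sub_eq_neg_add, mul_comm]

lemma aux_integral_translate {W : Type*} [NormedAddCommGroup W] [NormedSpace ℝ W]
    (PΘ : Measure Θ)
    (E : Θ → EuclideanSpace ℝ (Fin m)) (hE : Measurable E)
    (fE : EuclideanSpace ℝ (Fin m) → ℝ) (hfE0 : ∀ y, 0 ≤ fE y) (hfEm : Measurable fE)
    (hfEdens : Measure.map E PΘ = volume.withDensity (fun y => ENNReal.ofReal (fE y)))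
    (c : EuclideanSpace ℝ (Fin m)) (h : EuclideanSpace ℝ (Fin m) → W)
    (hh : StronglyMeasurable h) :
    ∫ θ, h (c + E θ) ∂PΘ = ∫ y, fE (y - c) • h y := by
  have h1 : ∫ θ, h (c + E θ) ∂PΘ = ∫ e, h (c + e) ∂(Measure.map E PΘ) :=
    (integral_map hE.aemeasurable
      (show StronglyMeasurable fun e : EuclideanSpace ℝ (Fin m) => h (c + e) from
        hh.comp_measurable (measurable_const_add c)).aestronglyMeasurable).symm
  have hdens : (volume : Measure (EuclideanSpace ℝ (Fin m))).withDensity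
      (fun y => ENNReal.ofReal (fE y))
      = volume.withDensity (fun y => ((fE y).toNNReal : ℝ≥0∞)) := rfl
  rw [h1, hfEdens, hdens,
    integral_withDensity_eq_integral_smul (hfEm.real_toNNReal) (fun e => h (c + e))]
  have h2 := integral_add_left_eq_self (μ := (volume : Measure (EuclideanSpace ℝ (Fin m))))
    (fun x => (fE x).toNNReal • h (c + x)) (-c)
  calc ∫ e, (fE e).toNNReal • h (c + e)
      = ∫ x, (fE (-c + x)).toNNReal • h (c + (-c + x)) := h2.symm
    _ = ∫ y, fE (y - c) • h y := by
        congr 1; funext x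
        rw [add_neg_cancel_left, ← sub_eq_neg_add, NNReal.smul_def,
          Real.coe_toNNReal _ (hfE0 _)]

lemma aux_lintegral_translate_one (PΘ : Measure Θ) [IsProbabilityMeasure PΘ]
    (E : Θ → EuclideanSpace ℝ (Fin m)) (hE : Measurable E)
    (fE : EuclideanSpace ℝ (Fin m) → ℝ)
    (hfEdens : Measure.map E PΘ = volume.withDensity (fun y => ENNReal.ofReal (fE y)))
    (c : EuclideanSpace ℝ (Fin m)) :
    ∫⁻ y, ENNReal.ofReal (fE (y - c)) = 1 := by
  have h0 : Measure.map E PΘ Set.univ = 1 := by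
    rw [Measure.map_apply hE MeasurableSet.univ]
    simp
  rw [hfEdens, withDensity_apply _ MeasurableSet.univ, setLIntegral_univ] at h0
  calc ∫⁻ y, ENNReal.ofReal (fE (y - c))
      = ∫⁻ y, ENNReal.ofReal (fE (-c + y)) := by simp_rw [sub_eq_neg_add]
    _ = ∫⁻ y, ENNReal.ofReal (fE y) :=
        lintegral_add_left_eq_self (μ := (volume : Measure (EuclideanSpace ℝ (Fin m))))
          (fun x => ENNReal.ofReal (fE x)) (-c)
    _ = 1 := h0

end AuxCondExp

theorem aux_main
    {Ξ Θ : Type*} [MeasurableSpace Ξ] [MeasurableSpace Θ]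
    (PΞ : Measure Ξ) (PΘ : Measure Θ)
    [IsProbabilityMeasure PΞ] [IsProbabilityMeasure PΘ]
    {m d : ℕ}
    (Y : Ξ → EuclideanSpace ℝ (Fin m)) (hY : Measurable Y)
    (E : Θ → EuclideanSpace ℝ (Fin m)) (hE : Measurable E)
    (fE : EuclideanSpace ℝ (Fin m) → ℝ) (hfE0 : ∀ y, 0 ≤ fE y)
    (hfEm : Measurable fE)
    (hfEdens : Measure.map E PΘ = volume.withDensity (fun y => ENNReal.ofReal (fE y)))
    (X : Ξ → EuclideanSpace ℝ (Fin d))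
    (hXm : StronglyMeasurable X)
    (hXint : Integrable X PΞ)
    (Z : Ξ × Θ → EuclideanSpace ℝ (Fin m))
    (hZ : Z = fun p => Y p.1 + E p.2)
    (Φ : EuclideanSpace ℝ (Fin m) → EuclideanSpace ℝ (Fin d))
    (hΦ : Φ = fun y =>
      if 0 < ∫ ξ, fE (y - Y ξ) ∂PΞ then
        (∫ ξ, fE (y - Y ξ) ∂PΞ)⁻¹ • ∫ ξ, fE (y - Y ξ) • X ξ ∂PΞ
      else 0) :
    Integrable Φ (Measure.map Z (PΞ.prod PΘ)) ∧
    ∀ B : Set (EuclideanSpace ℝ (Fin m)), MeasurableSet B →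
      ∫ ω in Z ⁻¹' B, X ω.1 ∂(PΞ.prod PΘ)
        = ∫ ω in Z ⁻¹' B, Φ (Z ω) ∂(PΞ.prod PΘ) := by
  have hZm : Measurable Z := by
    rw [hZ]; exact (hY.comp measurable_fst).add (hE.comp measurable_snd)
  have hsub : Measurable fun p : EuclideanSpace ℝ (Fin m) × Ξ => fE (p.1 - Y p.2) :=
    hfEm.comp (measurable_fst.sub (hY.comp measurable_snd))
  have hky : ∀ y : EuclideanSpace ℝ (Fin m), Measurable fun ξ => fE (y - Y ξ) :=
    fun y => hfEm.comp (measurable_const.sub hY)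
  have hky' : ∀ ξ : Ξ, Measurable fun y : EuclideanSpace ℝ (Fin m) => fE (y - Y ξ) :=
    fun ξ => hfEm.comp (measurable_id.sub measurable_const)
  have hgsm : StronglyMeasurable fun y : EuclideanSpace ℝ (Fin m) => ∫ ξ, fE (y - Y ξ) ∂PΞ :=
    hsub.stronglyMeasurable.integral_prod_right'
  have hNsm : StronglyMeasurable fun y : EuclideanSpace ℝ (Fin m) =>
      ∫ ξ, fE (y - Y ξ) • X ξ ∂PΞ :=
    (hsub.stronglyMeasurable.smul (hXm.comp_measurable measurable_snd)).integral_prod_right'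
  have hΦsm : StronglyMeasurable Φ := by
    rw [hΦ]
    exact StronglyMeasurable.ite (measurableSet_lt measurable_const hgsm.measurable)
      ((hgsm.measurable.inv.stronglyMeasurable).smul hNsm) stronglyMeasurable_const
  -- the ℝ≥0∞-valued denominator
  have hGm : Measurable fun y : EuclideanSpace ℝ (Fin m) =>
      ∫⁻ ξ, ENNReal.ofReal (fE (y - Y ξ)) ∂PΞ :=
    Measurable.lintegral_prod_right' hsub.ennreal_ofReal
  have hGtot : ∫⁻ y : EuclideanSpace ℝ (Fin m), ∫⁻ ξ, ENNReal.ofReal (fE (y - Y ξ)) ∂PΞ = 1 := by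
    rw [lintegral_lintegral_swap hsub.ennreal_ofReal.aemeasurable]
    calc ∫⁻ ξ, (∫⁻ y, ENNReal.ofReal (fE (y - Y ξ))) ∂PΞ
        = ∫⁻ _, (1 : ℝ≥0∞) ∂PΞ :=
          lintegral_congr fun ξ => aux_lintegral_translate_one PΘ E hE fE hfEdens (Y ξ)
      _ = 1 := by simp
  have hGfin : ∀ᵐ y : EuclideanSpace ℝ (Fin m) ∂volume,
      ∫⁻ ξ, ENNReal.ofReal (fE (y - Y ξ)) ∂PΞ < ⊤ :=
    ae_lt_top hGm (by rw [hGtot]; exact one_ne_top)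
  -- the dominating function H
  have hXnm : Measurable fun p : EuclideanSpace ℝ (Fin m) × Ξ => (‖X p.2‖₊ : ℝ≥0∞) :=
    (hXm.measurable.comp measurable_snd).enorm
  have hHmeas : Measurable fun p : EuclideanSpace ℝ (Fin m) × Ξ =>
      ENNReal.ofReal (fE (p.1 - Y p.2)) * ‖X p.2‖₊ := hsub.ennreal_ofReal.mul hXnm
  have hHm : Measurable fun y : EuclideanSpace ℝ (Fin m) =>
      ∫⁻ ξ, ENNReal.ofReal (fE (y - Y ξ)) * ‖X ξ‖₊ ∂PΞ :=
    Measurable.lintegral_prod_right' hHmeas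
  have hHtot : ∫⁻ y : EuclideanSpace ℝ (Fin m), ∫⁻ ξ, ENNReal.ofReal (fE (y - Y ξ)) * ‖X ξ‖₊ ∂PΞ
      = ∫⁻ ξ, (‖X ξ‖₊ : ℝ≥0∞) ∂PΞ := by
    rw [lintegral_lintegral_swap hHmeas.aemeasurable]
    refine lintegral_congr fun ξ => ?_
    have hmc : Measurable fun y0 : EuclideanSpace ℝ (Fin m) =>
        ENNReal.ofReal (fE (y0 - Y ξ)) := (hky' ξ).ennreal_ofReal
    rw [lintegral_mul_const _ hmc,
      aux_lintegral_translate_one PΘ E hE fE hfEdens (Y ξ), one_mul]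
  have hHne : ∫⁻ y : EuclideanSpace ℝ (Fin m), ∫⁻ ξ, ENNReal.ofReal (fE (y - Y ξ)) * ‖X ξ‖₊ ∂PΞ ≠ ⊤ := by
    rw [hHtot]; exact hXint.2.ne
  have hHfin : ∀ᵐ y : EuclideanSpace ℝ (Fin m) ∂volume,
      ∫⁻ ξ, ENNReal.ofReal (fE (y - Y ξ)) * ‖X ξ‖₊ ∂PΞ < ⊤ := ae_lt_top hHm hHne
  -- the key pointwise a.e. facts
  have hnorm_smul : ∀ (y : EuclideanSpace ℝ (Fin m)) (ξ : Ξ),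
      (‖fE (y - Y ξ) • X ξ‖₊ : ℝ≥0∞) = ENNReal.ofReal (fE (y - Y ξ)) * ‖X ξ‖₊ := by
    intro y ξ
    rw [nnnorm_smul, ENNReal.coe_mul, ← enorm_eq_nnnorm (fE (y - Y ξ)), Real.enorm_eq_ofReal (hfE0 _)]
  have hkey : ∀ᵐ y : EuclideanSpace ℝ (Fin m) ∂volume,
      ((∫ ξ, fE (y - Y ξ) ∂PΞ) • Φ y = ∫ ξ, fE (y - Y ξ) • X ξ ∂PΞ) ∧
      ((‖Φ y‖₊ : ℝ≥0∞) * ∫⁻ ξ, ENNReal.ofReal (fE (y - Y ξ)) ∂PΞ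
        ≤ ∫⁻ ξ, ENNReal.ofReal (fE (y - Y ξ)) * ‖X ξ‖₊ ∂PΞ) := by
    filter_upwards [hGfin, hHfin] with y hGy hHy
    have hgint : Integrable (fun ξ => fE (y - Y ξ)) PΞ := by
      refine ⟨(hky y).aestronglyMeasurable, ?_⟩
      show ∫⁻ ξ, (‖fE (y - Y ξ)‖₊ : ℝ≥0∞) ∂PΞ < ⊤
      calc ∫⁻ ξ, (‖fE (y - Y ξ)‖₊ : ℝ≥0∞) ∂PΞ
          = ∫⁻ ξ, ENNReal.ofReal (fE (y - Y ξ)) ∂PΞ :=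
            lintegral_congr fun ξ => Real.enorm_eq_ofReal (hfE0 _)
        _ < ⊤ := hGy
    have hgnn : 0 ≤ ∫ ξ, fE (y - Y ξ) ∂PΞ := integral_nonneg fun ξ => hfE0 _
    have hGof : ENNReal.ofReal (∫ ξ, fE (y - Y ξ) ∂PΞ)
        = ∫⁻ ξ, ENNReal.ofReal (fE (y - Y ξ)) ∂PΞ :=
      ofReal_integral_eq_lintegral_ofReal hgint (Filter.Eventually.of_forall fun ξ => hfE0 _)
    have hNle : (‖∫ ξ, fE (y - Y ξ) • X ξ ∂PΞ‖₊ : ℝ≥0∞)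
        ≤ ∫⁻ ξ, ENNReal.ofReal (fE (y - Y ξ)) * ‖X ξ‖₊ ∂PΞ := by
      refine (enorm_integral_le_lintegral_enorm _).trans_eq
        (lintegral_congr fun ξ => hnorm_smul y ξ)
    by_cases hpos : 0 < ∫ ξ, fE (y - Y ξ) ∂PΞ
    · have hΦy : Φ y = (∫ ξ, fE (y - Y ξ) ∂PΞ)⁻¹ • ∫ ξ, fE (y - Y ξ) • X ξ ∂PΞ := by
        rw [hΦ]; simp only [if_pos hpos]
      constructor
      · rw [hΦy, smul_inv_smul₀ hpos.ne']
      · rw [hΦy, ← hGof]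
        calc (‖(∫ ξ, fE (y - Y ξ) ∂PΞ)⁻¹ • ∫ ξ, fE (y - Y ξ) • X ξ ∂PΞ‖₊ : ℝ≥0∞)
              * ENNReal.ofReal (∫ ξ, fE (y - Y ξ) ∂PΞ)
            = (ENNReal.ofReal (∫ ξ, fE (y - Y ξ) ∂PΞ)⁻¹
                * ENNReal.ofReal (∫ ξ, fE (y - Y ξ) ∂PΞ))
                * (‖∫ ξ, fE (y - Y ξ) • X ξ ∂PΞ‖₊ : ℝ≥0∞) := by
              rw [nnnorm_smul, ENNReal.coe_mul,
                ← enorm_eq_nnnorm ((∫ ξ, fE (y - Y ξ) ∂PΞ)⁻¹), Real.enorm_eq_ofReal (inv_nonneg.2 hgnn)]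
              ring
          _ = (‖∫ ξ, fE (y - Y ξ) • X ξ ∂PΞ‖₊ : ℝ≥0∞) := by
              rw [← ENNReal.ofReal_mul (inv_nonneg.2 hgnn), inv_mul_cancel₀ hpos.ne',
                ENNReal.ofReal_one, one_mul]
          _ ≤ _ := hNle
    · have hz : ∫ ξ, fE (y - Y ξ) ∂PΞ = 0 := le_antisymm (not_lt.1 hpos) hgnn
      have hΦy : Φ y = 0 := by rw [hΦ]; simp only [if_neg hpos]
      have hfz : (fun ξ => fE (y - Y ξ)) =ᵐ[PΞ] 0 :=
        (integral_eq_zero_iff_of_nonneg (fun ξ => hfE0 _) hgint).mp hz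
      constructor
      · rw [hΦy, smul_zero]
        symm
        apply integral_eq_zero_of_ae
        filter_upwards [hfz] with ξ hξ
        simp only [Pi.zero_apply] at hξ ⊢
        rw [hξ, zero_smul]
      · rw [hΦy]; simp
  have hkey1 : ∀ᵐ y : EuclideanSpace ℝ (Fin m) ∂volume,
      (∫ ξ, fE (y - Y ξ) ∂PΞ) • Φ y = ∫ ξ, fE (y - Y ξ) • X ξ ∂PΞ :=
    hkey.mono fun y h => h.1
  have hbound : ∀ᵐ y : EuclideanSpace ℝ (Fin m) ∂volume,
      (‖Φ y‖₊ : ℝ≥0∞) * ∫⁻ ξ, ENNReal.ofReal (fE (y - Y ξ)) ∂PΞ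
        ≤ ∫⁻ ξ, ENNReal.ofReal (fE (y - Y ξ)) * ‖X ξ‖₊ ∂PΞ :=
    hkey.mono fun y h => h.2
  -- integrability of Φ ∘ Z
  have hΦZint : Integrable (fun ω => Φ (Z ω)) (PΞ.prod PΘ) := by
    refine ⟨(hΦsm.comp_measurable hZm).aestronglyMeasurable, ?_⟩
    show ∫⁻ ω, (‖Φ (Z ω)‖₊ : ℝ≥0∞) ∂(PΞ.prod PΘ) < ⊤
    have hmZ : Measurable fun ω : Ξ × Θ => (‖Φ (Z ω)‖₊ : ℝ≥0∞) :=
      (hΦsm.measurable.comp hZm).enorm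
    rw [lintegral_prod _ hmZ.aemeasurable]
    have hinner : ∀ ξ, ∫⁻ θ, (‖Φ (Z (ξ, θ))‖₊ : ℝ≥0∞) ∂PΘ
        = ∫⁻ y, (‖Φ y‖₊ : ℝ≥0∞) * ENNReal.ofReal (fE (y - Y ξ)) := by
      intro ξ
      have hzz : ∀ θ, Z (ξ, θ) = Y ξ + E θ := by intro θ; rw [hZ]
      simp_rw [hzz]
      exact aux_lintegral_translate PΘ E hE fE hfEm hfEdens (Y ξ) _ hΦsm.measurable.enorm
    simp_rw [hinner]
    have hswapm : AEMeasurable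
        (Function.uncurry fun (ξ : Ξ) (y : EuclideanSpace ℝ (Fin m)) =>
          (‖Φ y‖₊ : ℝ≥0∞) * ENNReal.ofReal (fE (y - Y ξ)))
        (PΞ.prod (volume : Measure (EuclideanSpace ℝ (Fin m)))) :=
      ((hΦsm.measurable.comp measurable_snd).enorm.mul
        ((hfEm.comp (measurable_snd.sub (hY.comp measurable_fst))).ennreal_ofReal)).aemeasurable
    rw [lintegral_lintegral_swap hswapm]
    calc ∫⁻ y, ∫⁻ ξ, (‖Φ y‖₊ : ℝ≥0∞) * ENNReal.ofReal (fE (y - Y ξ)) ∂PΞ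
        = ∫⁻ y, (‖Φ y‖₊ : ℝ≥0∞) * ∫⁻ ξ, ENNReal.ofReal (fE (y - Y ξ)) ∂PΞ :=
          lintegral_congr fun y => lintegral_const_mul _ (hky y).ennreal_ofReal
      _ ≤ ∫⁻ y, ∫⁻ ξ, ENNReal.ofReal (fE (y - Y ξ)) * ‖X ξ‖₊ ∂PΞ := lintegral_mono_ae hbound
      _ < ⊤ := hHne.lt_top
  refine ⟨(integrable_map_measure hΦsm.aestronglyMeasurable hZm.aemeasurable).mpr hΦZint, ?_⟩
  intro B hB
  have hmapfst : Measure.map Prod.fst (PΞ.prod PΘ) = PΞ := by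
    rw [Measure.map_fst_prod]; simp
  have hXfst : Integrable (fun ω : Ξ × Θ => X ω.1) (PΞ.prod PΘ) := by
    have h1 : Integrable X (Measure.map Prod.fst (PΞ.prod PΘ)) := by
      rw [hmapfst]; exact hXint
    exact (integrable_map_measure h1.1 measurable_fst.aemeasurable).mp h1
  -- LHS
  have hLHS : ∫ ω in Z ⁻¹' B, X ω.1 ∂(PΞ.prod PΘ)
      = ∫ y in B, (∫ ξ, fE (y - Y ξ) • X ξ ∂PΞ) ∂volume := by
    rw [← integral_indicator (hZm hB)]
    have hFint : Integrable ((Z ⁻¹' B).indicator fun ω : Ξ × Θ => X ω.1) (PΞ.prod PΘ) :=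
      hXfst.indicator (hZm hB)
    rw [integral_prod _ hFint]
    have hstep : ∀ ξ, ∫ θ, (Z ⁻¹' B).indicator (fun ω : Ξ × Θ => X ω.1) (ξ, θ) ∂PΘ
        = ∫ y in B, fE (y - Y ξ) • X ξ ∂volume := by
      intro ξ
      have h1 : ∀ θ, (Z ⁻¹' B).indicator (fun ω : Ξ × Θ => X ω.1) (ξ, θ)
          = B.indicator (fun _ => X ξ) (Y ξ + E θ) := by
        intro θ
        by_cases hmem : Y ξ + E θ ∈ B <;>
          simp [hZ, Set.indicator_apply, Set.mem_preimage, hmem]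
      simp_rw [h1]
      rw [aux_integral_translate PΘ E hE fE hfE0 hfEm hfEdens (Y ξ) _
        (stronglyMeasurable_const.indicator hB), ← integral_indicator hB]
      refine integral_congr_ae (Filter.Eventually.of_forall fun y => ?_)
      by_cases hy : y ∈ B <;>
        simp [Set.indicator_of_mem, Set.indicator_of_notMem, hy]
    simp_rw [hstep]
    have hswm : StronglyMeasurable fun p : Ξ × EuclideanSpace ℝ (Fin m) =>
        fE (p.2 - Y p.1) • X p.1 :=
      ((hfEm.comp (measurable_snd.sub (hY.comp measurable_fst))).stronglyMeasurable).smul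
        (hXm.comp_measurable measurable_fst)
    have hswapint : Integrable
        (Function.uncurry fun (ξ : Ξ) (y : EuclideanSpace ℝ (Fin m)) => fE (y - Y ξ) • X ξ)
        (PΞ.prod (volume.restrict B)) := by
      refine ⟨hswm.aestronglyMeasurable, ?_⟩
      show ∫⁻ p, (‖fE (p.2 - Y p.1) • X p.1‖₊ : ℝ≥0∞) ∂(PΞ.prod (volume.restrict B)) < ⊤
      rw [lintegral_prod _ hswm.measurable.nnnorm.coe_nnreal_ennreal.aemeasurable]
      have hb : ∀ ξ, ∫⁻ y in B, (‖fE (y - Y ξ) • X ξ‖₊ : ℝ≥0∞) ∂volume ≤ (‖X ξ‖₊ : ℝ≥0∞) := by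
        intro ξ
        calc ∫⁻ y in B, (‖fE (y - Y ξ) • X ξ‖₊ : ℝ≥0∞) ∂volume
            ≤ ∫⁻ y, (‖fE (y - Y ξ) • X ξ‖₊ : ℝ≥0∞) ∂volume := setLIntegral_le_lintegral _ _
          _ = ∫⁻ y, ENNReal.ofReal (fE (y - Y ξ)) * ‖X ξ‖₊ ∂volume :=
              lintegral_congr fun y => hnorm_smul y ξ
          _ = (∫⁻ y, ENNReal.ofReal (fE (y - Y ξ)) ∂volume) * ‖X ξ‖₊ :=
              lintegral_mul_const _ (hky' ξ).ennreal_ofReal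
          _ = (‖X ξ‖₊ : ℝ≥0∞) := by
              rw [aux_lintegral_translate_one PΘ E hE fE hfEdens (Y ξ), one_mul]
      calc ∫⁻ ξ, ∫⁻ y in B, (‖fE (y - Y ξ) • X ξ‖₊ : ℝ≥0∞) ∂volume ∂PΞ
          ≤ ∫⁻ ξ, (‖X ξ‖₊ : ℝ≥0∞) ∂PΞ := lintegral_mono hb
        _ < ⊤ := hXint.2
    exact integral_integral_swap hswapint
  -- RHS
  have hRHS : ∫ ω in Z ⁻¹' B, Φ (Z ω) ∂(PΞ.prod PΘ)
      = ∫ y in B, (∫ ξ, fE (y - Y ξ) ∂PΞ) • Φ y ∂volume := by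
    rw [← integral_indicator (hZm hB)]
    have hF2int : Integrable ((Z ⁻¹' B).indicator fun ω => Φ (Z ω)) (PΞ.prod PΘ) :=
      hΦZint.indicator (hZm hB)
    rw [integral_prod _ hF2int]
    have hstep : ∀ ξ, ∫ θ, (Z ⁻¹' B).indicator (fun ω => Φ (Z ω)) (ξ, θ) ∂PΘ
        = ∫ y in B, fE (y - Y ξ) • Φ y ∂volume := by
      intro ξ
      have h1 : ∀ θ, (Z ⁻¹' B).indicator (fun ω => Φ (Z ω)) (ξ, θ)
          = B.indicator Φ (Y ξ + E θ) := by
        intro θ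
        by_cases hmem : Y ξ + E θ ∈ B <;>
          simp [hZ, Set.indicator_apply, Set.mem_preimage, hmem]
      simp_rw [h1]
      rw [aux_integral_translate PΘ E hE fE hfE0 hfEm hfEdens (Y ξ) _
        (hΦsm.indicator hB), ← integral_indicator hB]
      refine integral_congr_ae (Filter.Eventually.of_forall fun y => ?_)
      by_cases hy : y ∈ B <;>
        simp [Set.indicator_of_mem, Set.indicator_of_notMem, hy]
    simp_rw [hstep]
    have hswm2 : StronglyMeasurable fun p : Ξ × EuclideanSpace ℝ (Fin m) =>
        fE (p.2 - Y p.1) • Φ p.2 :=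
      ((hfEm.comp (measurable_snd.sub (hY.comp measurable_fst))).stronglyMeasurable).smul
        (hΦsm.comp_measurable measurable_snd)
    have hswapint2 : Integrable
        (Function.uncurry fun (ξ : Ξ) (y : EuclideanSpace ℝ (Fin m)) => fE (y - Y ξ) • Φ y)
        (PΞ.prod (volume.restrict B)) := by
      refine ⟨hswm2.aestronglyMeasurable, ?_⟩
      show ∫⁻ p, (‖fE (p.2 - Y p.1) • Φ p.2‖₊ : ℝ≥0∞) ∂(PΞ.prod (volume.restrict B)) < ⊤
      rw [lintegral_prod _ hswm2.measurable.nnnorm.coe_nnreal_ennreal.aemeasurable]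
      have hnormΦ : ∀ (y : EuclideanSpace ℝ (Fin m)) (ξ : Ξ),
          (‖fE (y - Y ξ) • Φ y‖₊ : ℝ≥0∞) = ENNReal.ofReal (fE (y - Y ξ)) * ‖Φ y‖₊ := by
        intro y ξ
        rw [nnnorm_smul, ENNReal.coe_mul, ← enorm_eq_nnnorm (fE (y - Y ξ)), Real.enorm_eq_ofReal (hfE0 _)]
      have hstep2 : ∀ ξ, ∫⁻ y in B, (‖fE (y - Y ξ) • Φ y‖₊ : ℝ≥0∞) ∂volume
          ≤ ∫⁻ y, ENNReal.ofReal (fE (y - Y ξ)) * ‖Φ y‖₊ ∂volume := by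
        intro ξ
        calc ∫⁻ y in B, (‖fE (y - Y ξ) • Φ y‖₊ : ℝ≥0∞) ∂volume
            ≤ ∫⁻ y, (‖fE (y - Y ξ) • Φ y‖₊ : ℝ≥0∞) ∂volume := setLIntegral_le_lintegral _ _
          _ = ∫⁻ y, ENNReal.ofReal (fE (y - Y ξ)) * ‖Φ y‖₊ ∂volume :=
              lintegral_congr fun y => hnormΦ y ξ
      have hswapm2 : AEMeasurable
          (Function.uncurry fun (ξ : Ξ) (y : EuclideanSpace ℝ (Fin m)) =>
            ENNReal.ofReal (fE (y - Y ξ)) * ‖Φ y‖₊)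
          (PΞ.prod (volume : Measure (EuclideanSpace ℝ (Fin m)))) :=
      (((hfEm.comp (measurable_snd.sub (hY.comp measurable_fst))).ennreal_ofReal).mul
        (hΦsm.measurable.comp measurable_snd).enorm).aemeasurable
      calc ∫⁻ ξ, ∫⁻ y in B, (‖fE (y - Y ξ) • Φ y‖₊ : ℝ≥0∞) ∂volume ∂PΞ
          ≤ ∫⁻ ξ, ∫⁻ y, ENNReal.ofReal (fE (y - Y ξ)) * ‖Φ y‖₊ ∂volume ∂PΞ :=
            lintegral_mono hstep2
        _ = ∫⁻ y, ∫⁻ ξ, ENNReal.ofReal (fE (y - Y ξ)) * ‖Φ y‖₊ ∂PΞ ∂volume :=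
            lintegral_lintegral_swap hswapm2
        _ = ∫⁻ y, (‖Φ y‖₊ : ℝ≥0∞) * ∫⁻ ξ, ENNReal.ofReal (fE (y - Y ξ)) ∂PΞ ∂volume := by
            refine lintegral_congr fun y => ?_
            rw [← lintegral_const_mul _ (hky y).ennreal_ofReal]
            exact lintegral_congr fun ξ => mul_comm _ _
        _ ≤ ∫⁻ y, ∫⁻ ξ, ENNReal.ofReal (fE (y - Y ξ)) * ‖X ξ‖₊ ∂PΞ ∂volume :=
            lintegral_mono_ae hbound
        _ < ⊤ := hHne.lt_top
    rw [integral_integral_swap hswapint2]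
    exact setIntegral_congr_ae hB (Filter.Eventually.of_forall fun y _ =>
      integral_smul_const _ _)
  rw [hLHS, hRHS]
  exact setIntegral_congr_ae hB (hkey1.mono fun y h _ => h.symm)

/-- Conditioned expectation, simplified case (Corollary 1 of the paper): for a random
variable `X` depending only on the parameter domain `Ξ` and the measurement
`Z(ξ,θ) = Y(ξ) + E(θ)` with error density `f_E` continuous, the function
`Φ(y) = (∫_Ξ X(ξ) f_E(y − Y(ξ)) dP_Ξ) / (∫_Ξ f_E(y − Y(ξ)) dP_Ξ)`
(set to `0` where the denominator is not positive) is a version of the conditional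
expectation of `(ξ,θ) ↦ X(ξ)` given `Z`. -/
theorem conditioned_expectation_formula_parameter_only
    {Ξ Θ : Type*} [MeasurableSpace Ξ] [MeasurableSpace Θ]
    (PΞ : Measure Ξ) (PΘ : Measure Θ)
    [IsProbabilityMeasure PΞ] [IsProbabilityMeasure PΘ]
    {m d : ℕ}
    (Y : Ξ → EuclideanSpace ℝ (Fin m)) (hY : Measurable Y)
    (E : Θ → EuclideanSpace ℝ (Fin m)) (hE : Measurable E)
    (fE : EuclideanSpace ℝ (Fin m) → ℝ) (hfE0 : ∀ y, 0 ≤ fE y)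
    (hfEcont : Continuous fE)
    (hfEdens : Measure.map E PΘ = volume.withDensity (fun y => ENNReal.ofReal (fE y)))
    (X : Ξ → EuclideanSpace ℝ (Fin d))
    (hXint : Integrable X PΞ)
    (Z : Ξ × Θ → EuclideanSpace ℝ (Fin m))
    (hZ : Z = fun p => Y p.1 + E p.2)
    (Φ : EuclideanSpace ℝ (Fin m) → EuclideanSpace ℝ (Fin d))
    (hΦ : Φ = fun y =>
      if 0 < ∫ ξ, fE (y - Y ξ) ∂PΞ then
        (∫ ξ, fE (y - Y ξ) ∂PΞ)⁻¹ • ∫ ξ, fE (y - Y ξ) • X ξ ∂PΞ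
      else 0) :
    Integrable Φ (Measure.map Z (PΞ.prod PΘ)) ∧
    ∀ B : Set (EuclideanSpace ℝ (Fin m)), MeasurableSet B →
      ∫ ω in Z ⁻¹' B, X ω.1 ∂(PΞ.prod PΘ)
        = ∫ ω in Z ⁻¹' B, Φ (Z ω) ∂(PΞ.prod PΘ) := by
  obtain ⟨X', hX'm, hXX'⟩ : ∃ X', StronglyMeasurable X' ∧ X =ᵐ[PΞ] X' :=
    ⟨hXint.1.mk X, hXint.1.stronglyMeasurable_mk, hXint.1.ae_eq_mk⟩
  have hXint' : Integrable X' PΞ := hXint.congr hXX'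
  have hΦ' : Φ = fun y =>
      if 0 < ∫ ξ, fE (y - Y ξ) ∂PΞ then
        (∫ ξ, fE (y - Y ξ) ∂PΞ)⁻¹ • ∫ ξ, fE (y - Y ξ) • X' ξ ∂PΞ
      else 0 := by
    rw [hΦ]; funext y
    have hN : (∫ ξ, fE (y - Y ξ) • X ξ ∂PΞ) = ∫ ξ, fE (y - Y ξ) • X' ξ ∂PΞ :=
      integral_congr_ae (hXX'.mono fun ξ h => by dsimp only; rw [h])
    rw [hN]
  obtain ⟨h1, h2⟩ := aux_main PΞ PΘ Y hY E hE fE hfE0 hfEcont.measurable hfEdens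
    X' hX'm hXint' Z hZ Φ hΦ'
  refine ⟨h1, fun B hB => ?_⟩
  have hmapfst : Measure.map Prod.fst (PΞ.prod PΘ) = PΞ := by
    rw [Measure.map_fst_prod]; simp
  have hae : (fun ω : Ξ × Θ => X ω.1) =ᵐ[PΞ.prod PΘ] fun ω => X' ω.1 :=
    ae_eq_comp (measurable_fst.aemeasurable) (by rw [hmapfst]; exact hXX')
  calc ∫ ω in Z ⁻¹' B, X ω.1 ∂(PΞ.prod PΘ)
      = ∫ ω in Z ⁻¹' B, X' ω.1 ∂(PΞ.prod PΘ) := integral_congr_ae (ae_restrict_of_ae hae)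
    _ = ∫ ω in Z ⁻¹' B, Φ (Z ω) ∂(PΞ.prod PΘ) := h2 B hB
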